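/- Let m, n ≥ 1, let (n_1,…,n_k, r) be a tuple with n_i ≥ 1, r ≥ 0 and n_1+⋯+n_k+r = m+2n, and set ν_ℓ = n_1+⋯+n_ℓ. Let (D_1, E_1, …, D_k, E_k, D_0) be a partition of the set [1, m+1] into 2k+1 (possibly empty) subsets such that, assigning weight 1 to each element of [1,m] and weight 2n to the element m+1, the total weight of D_i ∪ E_i equals n_i for each i ∈ [1,k] and the total weight of D_0 equals r. Assume m+1 ∈ D_i for some (necessarily unique) i ∈ [0,k] (in particular m+1 lies in no E_j). For ℓ ∈ [1,k] define L_ℓ = Σ_{x ∈ (D_1∪⋯∪D_ℓ)∖{m+1}} (m+1−x) − Σ_{y ∈ E_1∪⋯∪E_ℓ} (m+1−y), and define R_ℓ = Σ_{x=1}^{ν_ℓ} (m+1−x) if i = 0 or ℓ < i, and R_ℓ = n + Σ_{x=1}^{ν_ℓ−2n} (m+1−x) if 1 ≤ i ≤ ℓ. Then for every ℓ ∈ [1,k]: L_ℓ ≤ R_ℓ, with equality if and only if (i = 0 or ℓ < i) and D_1∪⋯∪D_ℓ = [1, ν_ℓ]. Consequently, L_ℓ = R_ℓ holds for every ℓ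 ∈ [1,k] if and only if m+1 ∈ D_0, all E_ℓ are empty and D_ℓ = [ν_{ℓ−1}+1, ν_ℓ] for every ℓ ∈ [1,k]; in that case r ≥ 2n. -/

import Mathlib

namespace Stmt14

/-- Partial sums `ν_j = n 0 + ⋯ + n (j-1)` (the tuple is extended by zero beyond `k`). -/
def psum {k : ℕ} (n : Fin k → ℕ) (j : ℕ) : ℕ :=
  ∑ i ∈ Finset.range j, if h : i < k then n ⟨i, h⟩ else 0

/-- The quantity
`L_ℓ = Σ_{x ∈ (D_1∪⋯∪D_ℓ)∖{m+1}} (m+1-x) - Σ_{y ∈ E_1∪⋯∪E_ℓ} (m+1-y)`.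
The partition `(D_1, E_1, …, D_k, E_k, D_0)` of `[1, m+1]` is encoded by
`c : Fin (m+1) → Fin (k+1) × Bool`, where `(c s).1 = i < k` means that `s` lies in
`D_{i+1}` or `E_{i+1}` (according to whether `(c s).2` is `false` or `true`) and
`(c s).1 = k` means that `s ∈ D_0`. -/
def Lsum (m : ℕ) {k : ℕ} (c : Fin (m + 1) → Fin (k + 1) × Bool) (l : Fin k) : ℤ :=
  (∑ s ∈ Finset.univ.filter
      (fun s : Fin (m + 1) => (s : ℕ) ≠ m ∧ (c s).2 = false ∧ ((c s).1 : ℕ) ≤ (l : ℕ)),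
    ((m : ℤ) - (s : ℕ))) -
  (∑ s ∈ Finset.univ.filter
      (fun s : Fin (m + 1) => (c s).2 = true ∧ ((c s).1 : ℕ) ≤ (l : ℕ)),
    ((m : ℤ) - (s : ℕ)))

/-- The quantity `R_ℓ`: `Σ_{x=1}^{ν_ℓ} (m+1-x)` if `i = 0` or `ℓ < i` (where
`m+1 ∈ D_i`), and `n + Σ_{x=1}^{ν_ℓ-2n} (m+1-x)` if `1 ≤ i ≤ ℓ`. -/
def Rsum (m n : ℕ) {k : ℕ} (nn : Fin k → ℕ) (c : Fin (m + 1) → Fin (k + 1) × Bool)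
    (l : Fin k) : ℤ :=
  if (l : ℕ) < ((c ⟨m, Nat.lt_succ_self m⟩).1 : ℕ) then
    ∑ x ∈ Finset.range (psum nn ((l : ℕ) + 1)), ((m : ℤ) - x)
  else
    (n : ℤ) + ∑ x ∈ Finset.range (psum nn ((l : ℕ) + 1) - 2 * n), ((m : ℤ) - x)

/-- For the weighted partition `(D_1,E_1,…,D_k,E_k,D_0)` of `[1, m+1]`
(weight `1` on `[1,m]`, weight `2n` on `m+1`) subordinate to `(n_1,…,n_k,r)` and with
`m+1 ∈ D_i`: for every `ℓ ∈ [1,k]`, `L_ℓ ≤ R_ℓ` with equality iff (`i = 0` or `ℓ < i`) and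
`D_1 ∪ ⋯ ∪ D_ℓ = [1, ν_ℓ]`.  Consequently `L_ℓ = R_ℓ` holds for all `ℓ` iff `m+1 ∈ D_0`,
all the `E_ℓ` are empty and `D_ℓ = [ν_{ℓ-1}+1, ν_ℓ]` for every `ℓ`; in that case `r ≥ 2n`. -/
lemma sum_range_card_le (A : Finset ℕ) : ∑ x ∈ Finset.range A.card, x ≤ ∑ s ∈ A, s := by
  induction A using Finset.strongInduction with
  | _ A ih =>
    rcases A.eq_empty_or_nonempty with rfl | hA
    · simp
    · have hmem : A.max' hA ∈ A := A.max'_mem hA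
      have hcard : A.card ≤ A.max' hA + 1 := by
        have hsub : A ⊆ Finset.range (A.max' hA + 1) := fun s hs =>
          Finset.mem_range.mpr (Nat.lt_succ_of_le (A.le_max' s hs))
        simpa using Finset.card_le_card hsub
      have herase := ih (A.erase (A.max' hA)) (Finset.erase_ssubset hmem)
      have hc : (A.erase (A.max' hA)).card = A.card - 1 := Finset.card_erase_of_mem hmem
      have hcpos : 1 ≤ A.card := Finset.card_pos.mpr hA
      have h1 : A.card - 1 + 1 = A.card := Nat.succ_pred_eq_of_pos hcpos
      have hsplit : A.max' hA + ∑ s ∈ A.erase (A.max' hA), s = ∑ s ∈ A, s :=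
        Finset.add_sum_erase A id hmem
      rw [hc] at herase
      calc ∑ x ∈ Finset.range A.card, x
          = ∑ x ∈ Finset.range (A.card - 1), x + (A.card - 1) := by
            rw [← h1, Finset.sum_range_succ]; simp [h1]
        _ ≤ ∑ s ∈ A.erase (A.max' hA), s + A.max' hA := by
            have : A.card - 1 ≤ A.max' hA := by omega
            exact Nat.add_le_add herase this
        _ = ∑ s ∈ A, s := by rw [add_comm]; exact hsplit

lemma sum_range_card_lt (A : Finset ℕ) (h : A ≠ Finset.range A.card) :
    ∑ x ∈ Finset.range A.card, x < ∑ s ∈ A, s := by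
  have hex : ∃ s ∈ A, A.card ≤ s := by
    by_contra hcon
    push_neg at hcon
    exact h (Finset.eq_of_subset_of_card_le
      (fun s hs => Finset.mem_range.mpr (hcon s hs)) (by simp))
  obtain ⟨s, hs, hcs⟩ := hex
  have hcpos : 1 ≤ A.card := Finset.card_pos.mpr ⟨s, hs⟩
  have h1 := sum_range_card_le (A.erase s)
  have hc : (A.erase s).card = A.card - 1 := Finset.card_erase_of_mem hs
  rw [hc] at h1
  have hsplit : s + ∑ x ∈ A.erase s, x = ∑ x ∈ A, x := Finset.add_sum_erase A id hs
  have h2 : ∑ x ∈ Finset.range A.card, x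
      = ∑ x ∈ Finset.range (A.card - 1), x + (A.card - 1) := by
    rw [← Nat.succ_pred_eq_of_pos hcpos, Finset.sum_range_succ]
    simp [Nat.succ_pred_eq_of_pos hcpos]
  omega

lemma key (m : ℕ) (A : Finset (Fin (m+1))) :
    (∑ s ∈ A, ((m:ℤ) - (s:ℕ)) ≤ ∑ x ∈ Finset.range A.card, ((m:ℤ) - x)) ∧
    (∑ s ∈ A, ((m:ℤ) - (s:ℕ)) = ∑ x ∈ Finset.range A.card, ((m:ℤ) - x) ↔
      ∀ s : Fin (m+1), s ∈ A ↔ (s:ℕ) < A.card) := by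
  classical
  set A' := A.image Fin.val with hA'
  have hcard : A'.card = A.card := Finset.card_image_of_injective A Fin.val_injective
  have hsum : ∑ s ∈ A, ((m:ℤ) - (s:ℕ)) = ∑ x ∈ A', ((m:ℤ) - x) := by
    rw [hA', Finset.sum_image (fun a _ b _ h => Fin.val_injective h)]
  have halg : ∀ T : Finset ℕ, ∑ x ∈ T, ((m:ℤ) - x)
      = T.card * m - ((∑ x ∈ T, x : ℕ) : ℤ) := by
    intro T
    rw [Finset.sum_sub_distrib, Finset.sum_const, nsmul_eq_mul, Nat.cast_sum]
  have hcm : A.card ≤ m + 1 := by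
    have := Finset.card_le_univ A
    simpa using this
  have hiff : A' = Finset.range A.card ↔ (∀ s : Fin (m+1), s ∈ A ↔ (s:ℕ) < A.card) := by
    constructor
    · intro hEq s
      constructor
      · intro hsA
        have : (s:ℕ) ∈ A' := Finset.mem_image_of_mem _ hsA
        rw [hEq] at this
        exact Finset.mem_range.mp this
      · intro hlt
        have : (s:ℕ) ∈ A' := by rw [hEq]; exact Finset.mem_range.mpr hlt
        obtain ⟨t, ht, hts⟩ := Finset.mem_image.mp this
        rwa [Fin.val_injective hts] at ht
    · intro h
      ext x
      simp only [hA', Finset.mem_image, Finset.mem_range]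
      constructor
      · rintro ⟨s, hsA, rfl⟩
        exact (h s).mp hsA
      · intro hx
        have hxm : x < m + 1 := lt_of_lt_of_le hx hcm
        exact ⟨⟨x, hxm⟩, (h ⟨x, hxm⟩).mpr hx, rfl⟩
  constructor
  · rw [hsum, halg A', halg (Finset.range A.card), Finset.card_range, hcard]
    have := sum_range_card_le A'
    rw [hcard] at this
    have : ((∑ x ∈ Finset.range A.card, x : ℕ) : ℤ) ≤ ((∑ x ∈ A', x : ℕ) : ℤ) :=
      Int.ofNat_le.mpr this
    linarith
  · rw [hsum, halg A', halg (Finset.range A.card), Finset.card_range, hcard, ← hiff]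
    constructor
    · intro hEq
      by_contra hne
      have hlt := sum_range_card_lt A' (by rwa [hcard])
      rw [hcard] at hlt
      have : ((∑ x ∈ Finset.range A.card, x : ℕ) : ℤ) < ((∑ x ∈ A', x : ℕ) : ℤ) :=
        Int.ofNat_lt.mpr hlt
      omega
    · intro hEq
      rw [hEq]

lemma mono_aux (m a b : ℕ) (hab : a ≤ b) (hbm : b ≤ m) :
    (∑ x ∈ Finset.range a, ((m:ℤ) - x) ≤ ∑ x ∈ Finset.range b, ((m:ℤ) - x)) ∧
    (a < b → ∑ x ∈ Finset.range a, ((m:ℤ) - x) < ∑ x ∈ Finset.range b, ((m:ℤ) - x)) := by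
  have hsplit : ∑ x ∈ Finset.range a, ((m:ℤ) - x) + ∑ x ∈ Finset.Ico a b, ((m:ℤ) - x)
      = ∑ x ∈ Finset.range b, ((m:ℤ) - x) := Finset.sum_range_add_sum_Ico _ hab
  have hpos : ∀ x ∈ Finset.Ico a b, 0 < (m:ℤ) - x := by
    intro x hx
    have := (Finset.mem_Ico.mp hx).2
    have : (x:ℤ) < m := by exact_mod_cast lt_of_lt_of_le this hbm
    linarith
  constructor
  · have := Finset.sum_nonneg (fun x hx => le_of_lt (hpos x hx))
    linarith
  · intro hlt
    have hne : (Finset.Ico a b).Nonempty := by rw [Finset.nonempty_Ico]; exact hlt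
    have := Finset.sum_pos hpos hne
    linarith

lemma card_val_lt (m ν : ℕ) (hν : ν ≤ m + 1) :
    (Finset.univ.filter (fun s : Fin (m+1) => (s:ℕ) < ν)).card = ν := by
  have himg : (Finset.univ.filter (fun s : Fin (m+1) => (s:ℕ) < ν)).image Fin.val
      = Finset.range ν := by
    ext x
    simp only [Finset.mem_image, Finset.mem_filter, Finset.mem_univ, true_and,
      Finset.mem_range]
    constructor
    · rintro ⟨s, hs, rfl⟩; exact hs
    · intro hx; exact ⟨⟨x, lt_of_lt_of_le hx hν⟩, hx, rfl⟩
  have := Finset.card_image_of_injective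
    (Finset.univ.filter (fun s : Fin (m+1) => (s:ℕ) < ν)) Fin.val_injective
  rw [himg, Finset.card_range] at this
  exact this.symm

lemma psum_mono {k : ℕ} (nn : Fin k → ℕ) : Monotone (psum nn) := fun a b h =>
  Finset.sum_le_sum_of_subset (Finset.range_subset_range.mpr h)


lemma weight_eq (m n k : ℕ) (nn : Fin k → ℕ) (c : Fin (m + 1) → Fin (k + 1) × Bool)
    (hwD : ∀ i : Fin k,
      (∑ s ∈ Finset.univ.filter (fun s : Fin (m + 1) => (c s).1 = i.castSucc),
        (if (s : ℕ) = m then 2 * n else 1)) = nn i)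
    (l : Fin k) :
    ∑ s ∈ Finset.univ.filter (fun s : Fin (m+1) => ((c s).1 : ℕ) ≤ (l:ℕ)),
      (if (s:ℕ) = m then 2*n else 1) = psum nn ((l:ℕ)+1) := by
  classical
  have hfib := Finset.sum_fiberwise_eq_sum_filter Finset.univ (Finset.range ((l:ℕ)+1))
    (fun s : Fin (m+1) => ((c s).1 : ℕ)) (fun s => if (s:ℕ) = m then 2*n else 1)
  have hfilter : Finset.univ.filter (fun s : Fin (m+1) => ((c s).1 : ℕ) ∈ Finset.range ((l:ℕ)+1))
      = Finset.univ.filter (fun s : Fin (m+1) => ((c s).1 : ℕ) ≤ (l:ℕ)) := by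
    apply Finset.filter_congr
    intro s _
    simp [Nat.lt_succ_iff]
  rw [hfilter] at hfib
  rw [← hfib, psum]
  apply Finset.sum_congr rfl
  intro i hi
  have hik : i < k := lt_of_lt_of_le (Finset.mem_range.mp hi) l.2
  rw [dif_pos hik, ← hwD ⟨i, hik⟩]
  apply Finset.sum_congr _ (fun _ _ => rfl)
  apply Finset.filter_congr
  intro s _
  simp [Fin.ext_iff]



lemma main_l (m n k : ℕ) (hn : 0 < n) (nn : Fin k → ℕ)
    (c : Fin (m + 1) → Fin (k + 1) × Bool)
    (hwD : ∀ i : Fin k,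
      (∑ s ∈ Finset.univ.filter (fun s : Fin (m + 1) => (c s).1 = i.castSucc),
        (if (s : ℕ) = m then 2 * n else 1)) = nn i)
    (hmem : (c ⟨m, Nat.lt_succ_self m⟩).2 = false) (l : Fin k) :
    Lsum m c l ≤ Rsum m n nn c l ∧
    (Lsum m c l = Rsum m n nn c l ↔
      ((l : ℕ) < ((c ⟨m, Nat.lt_succ_self m⟩).1 : ℕ) ∧
        ∀ s : Fin (m + 1),
          ((c s).2 = false ∧ ((c s).1 : ℕ) ≤ (l : ℕ)) ↔ (s : ℕ) < psum nn ((l : ℕ) + 1))) ∧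
    (Lsum m c l = Rsum m n nn c l →
      ∀ s : Fin (m+1), (c s).2 = true → ¬ ((c s).1 : ℕ) ≤ (l:ℕ)) := by
  classical
  set mfin : Fin (m+1) := ⟨m, Nat.lt_succ_self m⟩ with hmfin
  set i := ((c mfin).1 : ℕ) with hidef
  set ν := psum nn ((l:ℕ)+1) with hν
  set Af := Finset.univ.filter
      (fun s : Fin (m+1) => (s:ℕ) ≠ m ∧ (c s).2 = false ∧ ((c s).1:ℕ) ≤ (l:ℕ)) with hAf
  set Bf := Finset.univ.filter
      (fun s : Fin (m+1) => (c s).2 = true ∧ ((c s).1:ℕ) ≤ (l:ℕ)) with hBf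
  set S := Finset.univ.filter (fun s : Fin (m+1) => ((c s).1:ℕ) ≤ (l:ℕ)) with hS
  set S' := S.erase mfin with hS'
  have hval_ne : ∀ s : Fin (m+1), s ≠ mfin ↔ (s:ℕ) ≠ m := by
    intro s; constructor
    · intro h hc; exact h (Fin.ext hc)
    · intro h hc; exact h (by rw [hc])
  -- A and B as filters of S'
  have hS'A : Af = S'.filter (fun s => (c s).2 = false) := by
    ext s
    simp only [hAf, hS', hS, Finset.mem_filter, Finset.mem_erase, Finset.mem_univ, true_and]
    constructor
    · rintro ⟨h1, h2, h3⟩; exact ⟨⟨(hval_ne s).mpr h1, h3⟩, h2⟩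
    · rintro ⟨⟨h1, h3⟩, h2⟩; exact ⟨(hval_ne s).mp h1, h2, h3⟩
  have hS'B : Bf = S'.filter (fun s => ¬ (c s).2 = false) := by
    ext s
    simp only [hBf, hS', hS, Finset.mem_filter, Finset.mem_erase, Finset.mem_univ, true_and,
      Bool.not_eq_false]
    constructor
    · rintro ⟨h1, h2⟩
      refine ⟨⟨?_, h2⟩, h1⟩
      intro hc; rw [hc, hmem] at h1; exact Bool.false_ne_true h1
    · rintro ⟨⟨_, h2⟩, h1⟩; exact ⟨h1, h2⟩
  have hcards : Af.card + Bf.card = S'.card := by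
    rw [hS'A, hS'B]
    exact Finset.card_filter_add_card_filter_not _
  have hS'le : S'.card ≤ m := by
    have hsub : S' ⊆ Finset.univ.erase mfin :=
      Finset.erase_subset_erase _ (Finset.filter_subset _ _)
    have := Finset.card_le_card hsub
    rwa [Finset.card_erase_of_mem (Finset.mem_univ _), Finset.card_univ, Fintype.card_fin,
      Nat.add_sub_cancel] at this
  have hW : ∑ s ∈ S, (if (s:ℕ) = m then 2*n else 1) = ν := weight_eq m n k nn c hwD l
  -- sum over S' is its card
  have hS'sum : ∑ s ∈ S', (if (s:ℕ) = m then 2*n else 1) = S'.card := by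
    rw [Finset.card_eq_sum_ones]
    apply Finset.sum_congr rfl
    intro s hs
    have : s ≠ mfin := (Finset.mem_erase.mp hs).1
    rw [if_neg ((hval_ne s).mp this)]
  -- key and positivity facts
  have hkeyA := key m Af
  have hAsub : ∀ s ∈ Af, (s:ℕ) < m := by
    intro s hs
    have := (Finset.mem_filter.mp hs).2.1
    have := s.isLt
    omega
  have hBval : ∀ s ∈ Bf, (s:ℕ) < m := by
    intro s hs
    have hsB := Finset.mem_filter.mp hs
    have hne : s ≠ mfin := by
      intro hc
      rw [hc, hmem] at hsB
      exact Bool.false_ne_true hsB.2.1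
    have h1 := (hval_ne s).mp hne
    have h2 := s.isLt
    omega
  have hBnonneg : 0 ≤ ∑ s ∈ Bf, ((m:ℤ) - (s:ℕ)) := by
    apply Finset.sum_nonneg
    intro s hs
    have h1 := hBval s hs
    have : ((s:ℕ):ℤ) < m := by exact_mod_cast h1
    linarith
  have hBpos : Bf.Nonempty → 0 < ∑ s ∈ Bf, ((m:ℤ) - (s:ℕ)) := by
    intro hne
    apply Finset.sum_pos _ hne
    intro s hs
    have h1 := hBval s hs
    have : ((s:ℕ):ℤ) < m := by exact_mod_cast h1
    linarith
  have hLdef : Lsum m c l = (∑ s ∈ Af, ((m:ℤ) - (s:ℕ))) - ∑ s ∈ Bf, ((m:ℤ) - (s:ℕ)) := rfl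
  by_cases hil : (l:ℕ) < i
  · -- case l < i
    have hmS : mfin ∉ S := by
      simp only [hS, Finset.mem_filter, Finset.mem_univ, true_and]
      have : ((c mfin).1 : ℕ) = i := rfl
      omega
    have hSS' : S' = S := Finset.erase_eq_of_notMem hmS
    have hScard : ∑ s ∈ S, (if (s:ℕ) = m then 2*n else 1) = S'.card := by
      rw [← hSS', hS'sum]
    have hν1 : Af.card + Bf.card = ν := by rw [hcards, ← hScard]; exact hW
    have hνm : ν ≤ m := by omega
    have haν : Af.card ≤ ν := by omega
    have hmono := mono_aux m Af.card ν haν hνm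
    have hRdef : Rsum m n nn c l = ∑ x ∈ Finset.range ν, ((m:ℤ) - x) := by
      simp only [Rsum]
      rw [if_pos hil]
    have hmain : Lsum m c l = Rsum m n nn c l ↔
        (Bf = ∅ ∧ Af.card = ν ∧ ∀ s : Fin (m+1), s ∈ Af ↔ (s:ℕ) < ν) := by
      constructor
      · intro heq
        rw [hLdef, hRdef] at heq
        have h3 := hkeyA.1
        have hae : Af.card = ν := by
          by_contra hne
          have hlt : Af.card < ν := lt_of_le_of_ne haν hne
          have := hmono.2 hlt
          linarith
        have hXY : ∑ x ∈ Finset.range Af.card, ((m:ℤ)-x)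
            = ∑ x ∈ Finset.range ν, ((m:ℤ)-x) := by rw [hae]
        have hBz : ∑ s ∈ Bf, ((m:ℤ) - (s:ℕ)) = 0 := by linarith
        have hAX : ∑ s ∈ Af, ((m:ℤ) - (s:ℕ))
            = ∑ x ∈ Finset.range Af.card, ((m:ℤ)-x) := by linarith
        have hBempty : Bf = ∅ := by
          by_contra hne
          have := hBpos (Finset.nonempty_iff_ne_empty.mpr hne)
          linarith
        have hAset := hkeyA.2.mp hAX
        exact ⟨hBempty, hae, fun s => by rw [hAset s, hae]⟩
      · rintro ⟨hBe, hae, hAset⟩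
        rw [hLdef, hRdef]
        have hBz : ∑ s ∈ Bf, ((m:ℤ) - (s:ℕ)) = 0 := by rw [hBe]; simp
        have hAX := hkeyA.2.mpr (fun s => by rw [hAset s, hae])
        rw [hBz, hAX, hae]
        ring
    have hsetiff : (Bf = ∅ ∧ Af.card = ν ∧ ∀ s : Fin (m+1), s ∈ Af ↔ (s:ℕ) < ν) ↔
        (∀ s : Fin (m+1), ((c s).2 = false ∧ ((c s).1:ℕ) ≤ (l:ℕ)) ↔ (s:ℕ) < ν) := by
      constructor
      · rintro ⟨hBe, hae, hAset⟩ s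
        by_cases hsm : (s:ℕ) = m
        · constructor
          · rintro ⟨_, hfs⟩
            exfalso
            have hsmf : s = mfin := Fin.ext hsm
            rw [hsmf] at hfs
            have h' : i ≤ (l:ℕ) := hfs
            omega
          · intro hlt
            exfalso
            omega
        · constructor
          · rintro ⟨hb, hfs⟩
            have hsA : s ∈ Af := by
              simp only [hAf, Finset.mem_filter, Finset.mem_univ, true_and]
              exact ⟨hsm, hb, hfs⟩
            exact (hAset s).mp hsA
          · intro hlt
            have hsA : s ∈ Af := (hAset s).mpr hlt
            have := Finset.mem_filter.mp hsA
            exact ⟨this.2.2.1, this.2.2.2⟩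
      · intro hcond
        have hAeq : Af = Finset.univ.filter (fun s : Fin (m+1) => (s:ℕ) < ν) := by
          ext s
          simp only [hAf, Finset.mem_filter, Finset.mem_univ, true_and]
          constructor
          · rintro ⟨h1, h2, h3⟩
            exact (hcond s).mp ⟨h2, h3⟩
          · intro hlt
            have h23 := (hcond s).mpr hlt
            refine ⟨?_, h23.1, h23.2⟩
            omega
        have hae : Af.card = ν := by rw [hAeq, card_val_lt m ν (by omega)]
        have hBe : Bf = ∅ := by
          have hb0 : Bf.card = 0 := by omega
          exact Finset.card_eq_zero.mp hb0
        refine ⟨hBe, hae, fun s => ?_⟩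
        rw [hAeq]
        simp
    refine ⟨?_, ?_, ?_⟩
    · rw [hLdef, hRdef]
      have h1 := hkeyA.1
      have h2 := hmono.1
      linarith
    · rw [hmain, hsetiff]
      constructor
      · intro h
        exact ⟨hil, h⟩
      · rintro ⟨_, h⟩
        exact h
    · intro heq s hb hf
      have hBe := (hmain.mp heq).1
      have hsB : s ∈ Bf := by
        simp only [hBf, Finset.mem_filter, Finset.mem_univ, true_and]
        exact ⟨hb, hf⟩
      rw [hBe] at hsB
      exact absurd hsB (Finset.notMem_empty s)
  · -- case i ≤ l
    have hmS : mfin ∈ S := by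
      simp only [hS, Finset.mem_filter, Finset.mem_univ, true_and]
      have : ((c mfin).1 : ℕ) = i := rfl
      omega
    have hScard : ∑ s ∈ S, (if (s:ℕ) = m then 2*n else 1) = 2*n + S'.card := by
      rw [← Finset.add_sum_erase S _ hmS, hS'sum]
      simp [hmfin]
    have hν2 : Af.card + Bf.card + 2*n = ν := by omega
    have hsub : ν - 2*n = Af.card + Bf.card := by omega
    have habm : Af.card + Bf.card ≤ m := by omega
    have hmono := mono_aux m Af.card (Af.card + Bf.card) (Nat.le_add_right _ _) habm
    have hRdef : Rsum m n nn c l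
        = (n:ℤ) + ∑ x ∈ Finset.range (Af.card + Bf.card), ((m:ℤ) - x) := by
      simp only [Rsum]
      rw [if_neg hil, hsub]
    have hstrict : Lsum m c l < Rsum m n nn c l := by
      rw [hLdef, hRdef]
      have h1 := hkeyA.1
      have h2 := hmono.1
      have hn' : (1:ℤ) ≤ n := by exact_mod_cast hn
      linarith
    refine ⟨le_of_lt hstrict, ⟨fun heq => absurd heq (ne_of_lt hstrict), ?_⟩,
      fun heq => absurd heq (ne_of_lt hstrict)⟩
    rintro ⟨h, _⟩
    exact absurd h hil


theorem stmt14 (m n k : ℕ) (hm : 0 < m) (hn : 0 < n)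
    (nn : Fin k → ℕ) (hpos : ∀ i, 1 ≤ nn i) (r : ℕ)
    (hsum : (∑ i, nn i) + r = m + 2 * n)
    (c : Fin (m + 1) → Fin (k + 1) × Bool)
    (hD0 : ∀ s, (c s).1 = Fin.last k → (c s).2 = false)
    (hwD : ∀ i : Fin k,
      (∑ s ∈ Finset.univ.filter (fun s : Fin (m + 1) => (c s).1 = i.castSucc),
        (if (s : ℕ) = m then 2 * n else 1)) = nn i)
    (hwr : (∑ s ∈ Finset.univ.filter (fun s : Fin (m + 1) => (c s).1 = Fin.last k),
        (if (s : ℕ) = m then 2 * n else 1)) = r)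
    (hmem : (c ⟨m, Nat.lt_succ_self m⟩).2 = false) :
    (∀ l : Fin k,
      Lsum m c l ≤ Rsum m n nn c l ∧
      (Lsum m c l = Rsum m n nn c l ↔
        ((l : ℕ) < ((c ⟨m, Nat.lt_succ_self m⟩).1 : ℕ) ∧
          ∀ s : Fin (m + 1),
            ((c s).2 = false ∧ ((c s).1 : ℕ) ≤ (l : ℕ)) ↔ (s : ℕ) < psum nn ((l : ℕ) + 1)))) ∧
    ((∀ l : Fin k, Lsum m c l = Rsum m n nn c l) ↔
      ((c ⟨m, Nat.lt_succ_self m⟩).1 = Fin.last k ∧ (∀ s, (c s).2 = false) ∧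
        ∀ l : Fin k, ∀ s : Fin (m + 1),
          ((c s).1 = l.castSucc ∧ (c s).2 = false) ↔
            (psum nn (l : ℕ) ≤ (s : ℕ) ∧ (s : ℕ) < psum nn ((l : ℕ) + 1)))) ∧
    ((∀ l : Fin k, Lsum m c l = Rsum m n nn c l) → 2 * n ≤ r) := by
  classical
  have H1 := fun l => main_l m n k hn nn c hwD hmem l
  have hc_of : (∀ l : Fin k, Lsum m c l = Rsum m n nn c l) →
      (c ⟨m, Nat.lt_succ_self m⟩).1 = Fin.last k := by
    intro hall
    rcases Nat.eq_zero_or_pos k with hk | hk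
    · subst hk
      apply Fin.ext
      have := (c ⟨m, Nat.lt_succ_self m⟩).1.isLt
      simp only [Fin.val_last]
      omega
    · set l : Fin k := ⟨k-1, by omega⟩ with hl
      have h2 := ((H1 l).2.1.mp (hall l)).1
      have hlval : (l:ℕ) = k-1 := rfl
      have h3 : ((c ⟨m, Nat.lt_succ_self m⟩).1 : ℕ) < k + 1 :=
        (c ⟨m, Nat.lt_succ_self m⟩).1.isLt
      apply Fin.ext
      simp only [Fin.val_last]
      omega
  have part2 : (∀ l : Fin k, Lsum m c l = Rsum m n nn c l) ↔
      ((c ⟨m, Nat.lt_succ_self m⟩).1 = Fin.last k ∧ (∀ s, (c s).2 = false) ∧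
        ∀ l : Fin k, ∀ s : Fin (m + 1),
          ((c s).1 = l.castSucc ∧ (c s).2 = false) ↔
            (psum nn (l : ℕ) ≤ (s : ℕ) ∧ (s : ℕ) < psum nn ((l : ℕ) + 1))) := by
    constructor
    · intro hall
      have hc := hc_of hall
      have hfalse : ∀ s, (c s).2 = false := by
        rcases Nat.eq_zero_or_pos k with hk | hk
        · subst hk
          intro s
          apply hD0 s
          apply Fin.ext
          have := (c s).1.isLt
          simp only [Fin.val_last]
          omega
        · intro s
          by_contra hb
          have hb' : (c s).2 = true := by
            cases h : (c s).2
            · exact absurd h hb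
            · rfl
          set l : Fin k := ⟨k-1, by omega⟩ with hl
          have hlval : (l:ℕ) = k-1 := rfl
          refine (H1 l).2.2 (hall l) s hb' ?_
          have hne : (c s).1 ≠ Fin.last k := by
            intro h
            rw [hD0 s h] at hb'
            exact Bool.false_ne_true hb'
          have hltk : ((c s).1 : ℕ) < k := by
            have h4 := (c s).1.isLt
            rcases Nat.lt_or_ge ((c s).1 : ℕ) k with h | h
            · exact h
            · exfalso
              apply hne
              apply Fin.ext
              simp only [Fin.val_last]
              omega
          omega
      have hcond : ∀ l : Fin k, ∀ s : Fin (m+1),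
          (((c s).1:ℕ) ≤ (l:ℕ)) ↔ (s:ℕ) < psum nn ((l:ℕ)+1) := by
        intro l s
        have h := ((H1 l).2.1.mp (hall l)).2 s
        rw [← h]
        simp [hfalse s]
      refine ⟨hc, hfalse, ?_⟩
      intro l s
      constructor
      · rintro ⟨h1, _⟩
        have hval : ((c s).1 : ℕ) = (l:ℕ) := by rw [h1]; simp
        refine ⟨?_, (hcond l s).mp (by omega)⟩
        rcases Nat.eq_zero_or_pos (l:ℕ) with h0 | h0
        · rw [h0]
          simp [psum]
        · set l' : Fin k := ⟨(l:ℕ)-1, by omega⟩ with hl'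
          have hl'val : (l':ℕ) = (l:ℕ)-1 := rfl
          have hnot : ¬ (((c s).1:ℕ) ≤ (l':ℕ)) := by omega
          have hge : ¬ ((s:ℕ) < psum nn ((l':ℕ)+1)) := fun hh => hnot ((hcond l' s).mpr hh)
          have heq : psum nn ((l':ℕ)+1) = psum nn (l:ℕ) := by
            congr 1
            omega
          rw [heq] at hge
          omega
      · rintro ⟨h1, h2⟩
        refine ⟨?_, hfalse s⟩
        have hle : ((c s).1:ℕ) ≤ (l:ℕ) := (hcond l s).mpr h2
        have hval : ((c s).1 : ℕ) = (l:ℕ) := by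
          rcases Nat.eq_zero_or_pos (l:ℕ) with h0 | h0
          · omega
          · set l' : Fin k := ⟨(l:ℕ)-1, by omega⟩ with hl'
            have hl'val : (l':ℕ) = (l:ℕ)-1 := rfl
            have heq : psum nn ((l':ℕ)+1) = psum nn (l:ℕ) := by
              congr 1
              omega
            have hnot : ¬ ((s:ℕ) < psum nn ((l':ℕ)+1)) := by
              rw [heq]
              omega
            have hge : ¬ (((c s).1:ℕ) ≤ (l':ℕ)) := fun hh => hnot ((hcond l' s).mp hh)
            omega
        apply Fin.ext
        simp [hval]
    · rintro ⟨hc, hfalse, hblocks⟩ l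
      apply (H1 l).2.1.mpr
      have hival : ((c ⟨m, Nat.lt_succ_self m⟩).1 : ℕ) = k := by rw [hc]; simp
      refine ⟨by rw [hival]; exact l.isLt, ?_⟩
      intro s
      have hstep : ∀ t : ℕ, t < k → (s:ℕ) < psum nn (t+1) → ((c s).1:ℕ) ≤ t := by
        intro t
        induction t with
        | zero =>
          intro ht h0
          have hz : psum nn ((⟨0, ht⟩ : Fin k) : ℕ) ≤ (s:ℕ) := by
            simp [psum]
          have := ((hblocks ⟨0, ht⟩ s).mpr ⟨hz, h0⟩).1
          rw [this]
          simp
        | succ t ih =>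
          intro ht h
          by_cases hlt : (s:ℕ) < psum nn (t+1)
          · exact le_trans (ih (by omega) hlt) (Nat.le_succ t)
          · push_neg at hlt
            have := ((hblocks ⟨t+1, ht⟩ s).mpr ⟨hlt, h⟩).1
            rw [this]
            simp
      constructor
      · rintro ⟨_, hfs⟩
        have hfk : ((c s).1 : ℕ) < k := by
          have := l.isLt
          omega
        have hj := (hblocks ⟨((c s).1:ℕ), hfk⟩ s).mp ⟨Fin.ext (by simp), hfalse s⟩
        have hmono := psum_mono nn (show ((c s).1:ℕ)+1 ≤ (l:ℕ)+1 by omega)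
        have hj2 : (s:ℕ) < psum nn (((c s).1:ℕ)+1) := hj.2
        omega
      · intro hlt
        exact ⟨hfalse s, hstep (l:ℕ) l.isLt hlt⟩
  refine ⟨fun l => ⟨(H1 l).1, (H1 l).2.1⟩, part2, ?_⟩
  intro hall
  have hc := hc_of hall
  rw [← hwr]
  have hmemf : (⟨m, Nat.lt_succ_self m⟩ : Fin (m+1)) ∈
      Finset.univ.filter (fun s : Fin (m + 1) => (c s).1 = Fin.last k) := by
    simp only [Finset.mem_filter, Finset.mem_univ, true_and]
    exact hc
  have hsingle := Finset.single_le_sum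
    (f := fun s : Fin (m+1) => if (s : ℕ) = m then 2 * n else 1)
    (fun i _ => Nat.zero_le _) hmemf
  simpa using hsingle


end Stmt14
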